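/- Let σ be a Hanabi deck over n values and c colors with multiplicity r = 1 (every (value,color) pair occurs exactly once, so N = cn), and let h be a hand size. For each i ≤ N let f_i = max{ j ≤ N : k_j = k_i and a_j ≤ a_i }, let 𝓘 be the collection of intervals (i, f_i] with f_i > i, and let w = max over j ≤ N of the number of intervals of 𝓘 containing j. Then there exists a winning play sequence for σ with hand size h if and only if w ≤ h. -/

import Mathlib

/-- A card is a pair (value, color). -/
abbrev Card : Type := ℕ × ℕ

/-- The card at (0-indexed) position `i` of deck `σ` (junk `(0,0)` when out of range). -/
def nth (σ : List Card) (i : ℕ) : Card := σ.getD i (0, 0)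

/-- A configuration: for each color, the highest value played so far in that color
(values `1,…,played k` of color `k` count as played), the hand (the set of positions
of the cards currently stored), and the set of positions of the cards played so far. -/
structure Config where
  played : ℕ → ℕ
  hand : Finset ℕ
  done : Finset ℕ

/-- `PlayFromHand σ cfg cfg'`: starting from `cfg`, play zero or more cards stored
in the hand (each playable card increments the progress of its color). -/
inductive PlayFromHand (σ : List Card) : Config → Config → Prop
  | refl (cfg : Config) : PlayFromHand σ cfg cfg
  | play (cfg cfg' : Config) (j : ℕ) (hj : j ∈ cfg.hand)
      (hplay : cfg.played (nth σ j).2 + 1 = (nth σ j).1)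
      (htail : PlayFromHand σ
        ⟨Function.update cfg.played (nth σ j).2 (nth σ j).1,
          cfg.hand.erase j, insert j cfg.done⟩ cfg') :
      PlayFromHand σ cfg cfg'

/-- `Step σ h i cfg cfg'`: processing the drawn card at position `i` with hand size `h`,
the player either discards it, stores it (the hand may never exceed `h` cards), or plays
it immediately (followed by playing any number of stored cards). -/
inductive Step (σ : List Card) (h : ℕ) (i : ℕ) : Config → Config → Prop
  | discard (cfg : Config) : Step σ h i cfg cfg
  | store (cfg : Config) (hsize : (insert i cfg.hand).card ≤ h) :
      Step σ h i cfg ⟨cfg.played, insert i cfg.hand, cfg.done⟩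
  | playNow (cfg cfg' : Config)
      (hplay : cfg.played (nth σ i).2 + 1 = (nth σ i).1)
      (htail : PlayFromHand σ
        ⟨Function.update cfg.played (nth σ i).2 (nth σ i).1,
          cfg.hand, insert i cfg.done⟩ cfg') :
      Step σ h i cfg cfg'

/-- The initial configuration: nothing played, empty hand. -/
def Config.initial : Config := ⟨fun _ => 0, ∅, ∅⟩

/-- A play sequence with hand size `h` on deck `σ`, starting from configuration `start`:
a sequence of configurations where the `i`-th step processes the card at position `i`. -/
structure PlaySeq (σ : List Card) (h : ℕ) (start : Config) where
  cfgs : ℕ → Config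
  init : cfgs 0 = start
  step : ∀ i < σ.length, Step σ h i (cfgs i) (cfgs (i + 1))

/-- The final configuration of a play sequence. -/
def PlaySeq.final {σ : List Card} {h : ℕ} {start : Config} (ps : PlaySeq σ h start) :
    Config := ps.cfgs σ.length

/-- A winning play sequence: for every color `k ∈ {1,…,c}`, all values `1,…,n` are played. -/
def PlaySeq.Winning {σ : List Card} {h : ℕ} {start : Config} (ps : PlaySeq σ h start)
    (n c : ℕ) : Prop :=
  ∀ k, 1 ≤ k → k ≤ c → n ≤ ps.final.played k

/-- `σ` is a deck over `n` values and `c` colors. -/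
def ValidDeck (σ : List Card) (n c : ℕ) : Prop :=
  ∀ cd ∈ σ, 1 ≤ cd.1 ∧ cd.1 ≤ n ∧ 1 ≤ cd.2 ∧ cd.2 ≤ c

/-- `lastLE σ i` is `f_i`: the largest position `j` (with `j < N`) holding a card of the
same color as the card at position `i` and of value at most that of the card at `i`. -/
def lastLE (σ : List Card) (i : ℕ) : ℕ :=
  ((Finset.range σ.length).filter
    (fun j => (nth σ j).2 = (nth σ i).2 ∧ (nth σ j).1 ≤ (nth σ i).1)).sup id

/-- `w`: the maximum, over positions `j`, of the number of intervals `(i, f_i]`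
(with `f_i > i`) containing `j`. -/
def overlapWidth (σ : List Card) : ℕ :=
  (Finset.range σ.length).sup
    (fun j => ((Finset.range σ.length).filter
      (fun i => i < j ∧ j ≤ lastLE σ i)).card)

/-! ### Auxiliary development -/

namespace HanabiAux

open Finset

theorem beq_inst_eq :
    (@instBEqOfDecidableEq (ℕ×ℕ) instDecidableEqProd) = (instBEqProd (α := ℕ) (β := ℕ)) := by
  have hl : @LawfulBEq (ℕ×ℕ) (@instBEqOfDecidableEq (ℕ×ℕ) instDecidableEqProd) := by
    infer_instance
  exact @lawful_beq_subsingleton (ℕ×ℕ) _ _ hl (by infer_instance)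

variable {n c h : ℕ} {σ : List Card}

theorem nth_eq_getElem {i : ℕ} (hi : i < σ.length) : nth σ i = σ[i] :=
  List.getD_eq_getElem σ _ hi

theorem nth_junk {i : ℕ} (hi : σ.length ≤ i) : nth σ i = (0, 0) :=
  List.getD_eq_default σ _ hi

theorem nth_mem {i : ℕ} (hi : i < σ.length) : nth σ i ∈ σ := by
  rw [nth_eq_getElem hi]; exact List.getElem_mem hi

theorem nth_valid (hval : ValidDeck σ n c) {i : ℕ} (hi : i < σ.length) :
    1 ≤ (nth σ i).1 ∧ (nth σ i).1 ≤ n ∧ 1 ≤ (nth σ i).2 ∧ (nth σ i).2 ≤ c :=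
  hval _ (nth_mem hi)

/-- The hypothesis package of the theorem. -/
def Uniq (σ : List Card) (n c : ℕ) : Prop :=
  ∀ a k, 1 ≤ a → a ≤ n → 1 ≤ k → k ≤ c → σ.count (a, k) = 1

theorem card_mem (huniq : Uniq σ n c) {a k : ℕ}
    (ha1 : 1 ≤ a) (han : a ≤ n) (hk1 : 1 ≤ k) (hkc : k ≤ c) : ((a, k) : Card) ∈ σ :=
  List.count_pos_iff.mp (by rw [huniq a k ha1 han hk1 hkc]; omega)

theorem deck_nodup (hval : ValidDeck σ n c) (huniq : Uniq σ n c) : σ.Nodup := by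
  rw [List.nodup_iff_count_le_one]
  intro cd
  by_cases hcd : cd ∈ σ
  · obtain ⟨h1, h2, h3, h4⟩ := hval cd hcd
    have : σ.count (cd.1, cd.2) = 1 := huniq cd.1 cd.2 h1 h2 h3 h4
    rw [show ((cd.1, cd.2) : Card) = cd from rfl] at this
    omega
  · rw [List.count_eq_zero_of_not_mem hcd]; omega

theorem nth_inj (hval : ValidDeck σ n c) (huniq : Uniq σ n c) {i j : ℕ}
    (hi : i < σ.length) (hj : j < σ.length) (he : nth σ i = nth σ j) : i = j := by
  rw [nth_eq_getElem hi, nth_eq_getElem hj] at he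
  exact (List.Nodup.getElem_inj_iff (deck_nodup hval huniq)).mp he

/-- Position of a card in the deck (junk value `σ.length` for missing cards). -/
def fpos (σ : List Card) (cd : Card) : ℕ :=
  if cd ∈ σ then ((Finset.range σ.length).filter (fun p => nth σ p = cd)).sup id
  else σ.length

theorem fpos_spec' (hval : ValidDeck σ n c) (huniq : Uniq σ n c) {cd : Card} (hcd : cd ∈ σ) :
    fpos σ cd < σ.length ∧ nth σ (fpos σ cd) = cd := by
  obtain ⟨p, hp, hpe⟩ := List.mem_iff_getElem.mp hcd
  have hset : (Finset.range σ.length).filter (fun q => nth σ q = cd) = {p} := by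
    ext q
    simp only [Finset.mem_filter, Finset.mem_range, Finset.mem_singleton]
    constructor
    · rintro ⟨hq, he⟩
      exact nth_inj hval huniq hq hp (by rw [he, nth_eq_getElem hp, hpe])
    · rintro rfl
      exact ⟨hp, by rw [nth_eq_getElem hp, hpe]⟩
  rw [fpos, if_pos hcd, hset]
  simp only [Finset.sup_singleton, id]
  exact ⟨hp, by rw [nth_eq_getElem hp, hpe]⟩

theorem fpos_nth (hval : ValidDeck σ n c) (huniq : Uniq σ n c) {i : ℕ} (hi : i < σ.length) :
    fpos σ (nth σ i) = i := by
  obtain ⟨h1, h2⟩ := fpos_spec' hval huniq (nth_mem hi)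
  exact nth_inj hval huniq h1 hi h2

theorem mem_of_fpos_lt {cd : Card} (hlt : fpos σ cd < σ.length) : cd ∈ σ := by
  by_contra hcd
  rw [fpos, if_neg hcd] at hlt
  omega

/-- Greedy progress: largest `a ≤ n` such that all cards `(1,k),…,(a,k)` occur
before position `j`. -/
def G (σ : List Card) (n : ℕ) (j k : ℕ) : ℕ :=
  (@Finset.filter ℕ (fun a => ∀ b ∈ Finset.Icc 1 a, fpos σ (b, k) < j)
    (fun _ => Finset.decidableDforallFinset) (Finset.Icc 1 n)).sup id

theorem G_le {j k : ℕ} : G σ n j k ≤ n := by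
  rw [G]
  exact Finset.sup_le fun a ha => (Finset.mem_Icc.mp (Finset.mem_filter.mp ha).1).2

theorem G_lt {j k b : ℕ} (hb1 : 1 ≤ b) (hb : b ≤ G σ n j k) : fpos σ (b, k) < j := by
  rw [G] at hb
  obtain ⟨a, ha, hba⟩ := (Finset.le_sup_iff (show (0:ℕ) < b by omega)).mp hb
  obtain ⟨-, hprop⟩ := Finset.mem_filter.mp ha
  exact hprop b (Finset.mem_Icc.mpr ⟨hb1, hba⟩)

theorem le_G {j k a : ℕ} (han : a ≤ n) (hp : ∀ b ∈ Finset.Icc 1 a, fpos σ (b, k) < j) :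
    a ≤ G σ n j k := by
  rw [G]
  rcases Nat.eq_zero_or_pos a with rfl | ha0
  · exact Nat.zero_le _
  · exact Finset.le_sup (f := id) (Finset.mem_filter.mpr ⟨Finset.mem_Icc.mpr ⟨ha0, han⟩, hp⟩)

theorem G_mono {j j' k : ℕ} (hjj : j ≤ j') : G σ n j k ≤ G σ n j' k :=
  le_G G_le fun b hb =>
    lt_of_lt_of_le (G_lt (Finset.mem_Icc.mp hb).1 (Finset.mem_Icc.mp hb).2) hjj

theorem G_zero {k : ℕ} : G σ n 0 k = 0 := by
  rw [G]
  refine Nat.le_zero.mp (Finset.sup_le fun a ha => ?_)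
  obtain ⟨hIcc, hprop⟩ := Finset.mem_filter.mp ha
  have := hprop 1 (Finset.mem_Icc.mpr ⟨le_refl 1, (Finset.mem_Icc.mp hIcc).1⟩)
  omega

theorem G_lt_value (hval : ValidDeck σ n c) (huniq : Uniq σ n c) {i : ℕ} (hi : i < σ.length) :
    G σ n i (nth σ i).2 < (nth σ i).1 := by
  by_contra hcon
  push_neg at hcon
  have h1 : 1 ≤ (nth σ i).1 := (nth_valid hval hi).1
  have := G_lt h1 hcon
  rw [show (((nth σ i).1, (nth σ i).2) : Card) = nth σ i from rfl,
    fpos_nth hval huniq hi] at this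
  omega

theorem G_succ_of_ne (hval : ValidDeck σ n c) (huniq : Uniq σ n c) {i : ℕ}
    (hi : i < σ.length) (k : ℕ) (hk : k ≠ (nth σ i).2) : G σ n (i+1) k = G σ n i k := by
  refine le_antisymm (le_G G_le fun b hb => ?_) (G_mono (Nat.le_succ i))
  obtain ⟨hb1, hb2⟩ := Finset.mem_Icc.mp hb
  have hlt : fpos σ (b, k) < i + 1 := G_lt hb1 hb2
  rcases Nat.lt_or_ge (fpos σ (b, k)) i with h | h
  · exact h
  · exfalso
    have heq : fpos σ (b, k) = i := by omega
    have hmem : ((b, k) : Card) ∈ σ := mem_of_fpos_lt (by omega)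
    have := (fpos_spec' hval huniq hmem).2
    rw [heq] at this
    exact hk (by rw [this])

theorem G_succ_store (hval : ValidDeck σ n c) (huniq : Uniq σ n c) {i : ℕ}
    (hi : i < σ.length) (hst : G σ n i (nth σ i).2 + 1 < (nth σ i).1) :
    G σ n (i+1) (nth σ i).2 = G σ n i (nth σ i).2 := by
  refine le_antisymm ?_ (G_mono (Nat.le_succ i))
  by_contra hcon
  push_neg at hcon
  have hg1 : G σ n i (nth σ i).2 + 1 ≤ G σ n (i+1) (nth σ i).2 := hcon
  have hlt : fpos σ (G σ n i (nth σ i).2 + 1, (nth σ i).2) < i + 1 := G_lt (by omega) hg1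
  have hmem : ((G σ n i (nth σ i).2 + 1, (nth σ i).2) : Card) ∈ σ := mem_of_fpos_lt (by omega)
  have hspec := fpos_spec' hval huniq hmem
  have hne : fpos σ (G σ n i (nth σ i).2 + 1, (nth σ i).2) ≠ i := by
    intro he
    rw [he] at hspec
    have : (nth σ i).1 = G σ n i (nth σ i).2 + 1 := by rw [hspec.2]
    omega
  have hlti : fpos σ (G σ n i (nth σ i).2 + 1, (nth σ i).2) < i := by omega
  have han : G σ n i (nth σ i).2 + 1 ≤ n := by
    have := (nth_valid hval hi).2.1
    omega
  have : G σ n i (nth σ i).2 + 1 ≤ G σ n i (nth σ i).2 := by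
    apply le_G han
    intro b hb
    obtain ⟨hb1, hb2⟩ := Finset.mem_Icc.mp hb
    rcases Nat.lt_or_ge b (G σ n i (nth σ i).2 + 1) with hblt | hbge
    · exact G_lt (σ := σ) (n := n) (j := i) hb1 (by omega)
    · have hbe : b = G σ n i (nth σ i).2 + 1 := by omega
      rw [hbe]; exact hlti
  omega

theorem G_succ_play (hval : ValidDeck σ n c) (huniq : Uniq σ n c) {i : ℕ}
    (hi : i < σ.length) (hpl : (nth σ i).1 = G σ n i (nth σ i).2 + 1) :
    (nth σ i).1 ≤ G σ n (i+1) (nth σ i).2 := by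
  apply le_G (nth_valid hval hi).2.1
  intro b hb
  obtain ⟨hb1, hb2⟩ := Finset.mem_Icc.mp hb
  rcases Nat.lt_or_ge b (nth σ i).1 with hblt | hbge
  · have := G_lt (σ := σ) (n := n) (j := i) (k := (nth σ i).2) hb1 (by omega)
    omega
  · have hbe : b = (nth σ i).1 := by omega
    rw [hbe, show (((nth σ i).1, (nth σ i).2) : Card) = nth σ i from rfl,
      fpos_nth hval huniq hi]
    omega

/-- The hand of the greedy strategy at time `j`, given progress function `g`. -/
def Hset (σ : List Card) (j : ℕ) (g : ℕ → ℕ) : Finset ℕ :=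
  (Finset.range j).filter (fun p => g (nth σ p).2 < (nth σ p).1)

/-- The played positions of the greedy strategy at time `j`, given progress `g`. -/
def Dset (σ : List Card) (j : ℕ) (g : ℕ → ℕ) : Finset ℕ :=
  (Finset.range j).filter (fun p => (nth σ p).1 ≤ g (nth σ p).2)

/-- The greedy configuration at time `j`. -/
def gCfg (σ : List Card) (n j : ℕ) : Config :=
  ⟨G σ n j, Hset σ j (G σ n j), Dset σ j (G σ n j)⟩

theorem Hset_succ_pos {i : ℕ} {g : ℕ → ℕ} (hpred : g (nth σ i).2 < (nth σ i).1) :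
    Hset σ (i+1) g = insert i (Hset σ i g) := by
  rw [Hset, Hset, Finset.range_add_one, Finset.filter_insert, if_pos hpred]

theorem Hset_succ_neg {i : ℕ} {g : ℕ → ℕ} (hpred : ¬ g (nth σ i).2 < (nth σ i).1) :
    Hset σ (i+1) g = Hset σ i g := by
  rw [Hset, Hset, Finset.range_add_one, Finset.filter_insert, if_neg hpred]

theorem Dset_succ_pos {i : ℕ} {g : ℕ → ℕ} (hpred : (nth σ i).1 ≤ g (nth σ i).2) :
    Dset σ (i+1) g = insert i (Dset σ i g) := by
  rw [Dset, Dset, Finset.range_add_one, Finset.filter_insert, if_pos hpred]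

theorem Dset_succ_neg {i : ℕ} {g : ℕ → ℕ} (hpred : ¬ (nth σ i).1 ≤ g (nth σ i).2) :
    Dset σ (i+1) g = Dset σ i g := by
  rw [Dset, Dset, Finset.range_add_one, Finset.filter_insert, if_neg hpred]

theorem Hset_erase (hval : ValidDeck σ n c) (huniq : Uniq σ n c) {j : ℕ}
    (hj : j ≤ σ.length) (g : ℕ → ℕ) {q m k0 : ℕ}
    (hq : q < σ.length) (hqe : nth σ q = (m+1, k0)) :
    (Hset σ j (Function.update g k0 m)).erase q = Hset σ j (Function.update g k0 (m+1)) := by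
  ext p
  simp only [Hset, Finset.mem_erase, Finset.mem_filter, Finset.mem_range]
  constructor
  · rintro ⟨hpq, hpj, hpred⟩
    refine ⟨hpj, ?_⟩
    by_cases hpk : (nth σ p).2 = k0
    · rw [hpk, Function.update_self] at hpred ⊢
      rcases Nat.lt_or_ge (m+1) (nth σ p).1 with hgt | hle
      · exact hgt
      · exfalso
        have hv : (nth σ p).1 = m + 1 := by omega
        have hpe : nth σ p = ((m+1 : ℕ), k0) := by rw [← hv, ← hpk]
        exact hpq (nth_inj hval huniq (lt_of_lt_of_le hpj hj) hq (hpe.trans hqe.symm))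
    · rwa [Function.update_of_ne hpk] at hpred ⊢
  · rintro ⟨hpj, hpred⟩
    have hpq : p ≠ q := by
      intro he
      rw [he, hqe] at hpred
      simp [Function.update_self] at hpred
    refine ⟨hpq, hpj, ?_⟩
    by_cases hpk : (nth σ p).2 = k0
    · rw [hpk, Function.update_self] at hpred ⊢; omega
    · rwa [Function.update_of_ne hpk] at hpred ⊢

theorem Dset_insert (hval : ValidDeck σ n c) (huniq : Uniq σ n c) {j : ℕ}
    (hj : j ≤ σ.length) (g : ℕ → ℕ) {q m k0 : ℕ}
    (hq : q < σ.length) (hqj : q < j) (hqe : nth σ q = (m+1, k0)) :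
    insert q (Dset σ j (Function.update g k0 m)) = Dset σ j (Function.update g k0 (m+1)) := by
  ext p
  simp only [Dset, Finset.mem_insert, Finset.mem_filter, Finset.mem_range]
  constructor
  · rintro (rfl | ⟨hpj, hpred⟩)
    · exact ⟨hqj, by rw [hqe]; simp [Function.update_self]⟩
    · refine ⟨hpj, ?_⟩
      by_cases hpk : (nth σ p).2 = k0
      · rw [hpk, Function.update_self] at hpred ⊢; omega
      · rwa [Function.update_of_ne hpk] at hpred ⊢
  · rintro ⟨hpj, hpred⟩
    by_cases hpk : (nth σ p).2 = k0
    · rw [hpk, Function.update_self] at hpred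
      rcases Nat.lt_or_ge (nth σ p).1 (m+1) with hlt | hge
      · refine Or.inr ⟨hpj, ?_⟩
        rw [hpk, Function.update_self]; omega
      · have hv : (nth σ p).1 = m + 1 := by omega
        have hpe : nth σ p = ((m+1 : ℕ), k0) := by rw [← hv, ← hpk]
        exact Or.inl (nth_inj hval huniq (lt_of_lt_of_le hpj hj) hq (hpe.trans hqe.symm))
    · exact Or.inr ⟨hpj, by rwa [Function.update_of_ne hpk] at hpred ⊢⟩

theorem lastLE_lt_length (hN : 0 < σ.length) (i : ℕ) : lastLE σ i < σ.length := by
  rw [lastLE]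
  refine (Finset.sup_lt_iff hN).mpr fun q hq => ?_
  simpa using (Finset.mem_range.mp (Finset.mem_filter.mp hq).1)

theorem le_lastLE {q i : ℕ} (hq : q < σ.length) (hcol : (nth σ q).2 = (nth σ i).2)
    (hle : (nth σ q).1 ≤ (nth σ i).1) : q ≤ lastLE σ i :=
  Finset.le_sup (f := id)
    (Finset.mem_filter.mpr ⟨Finset.mem_range.mpr hq, hcol, hle⟩)

theorem Hset_mem_lastLE (hval : ValidDeck σ n c) (huniq : Uniq σ n c) {j p : ℕ}
    (hj : j ≤ σ.length) (hp : p ∈ Hset σ j (G σ n j)) : p < j ∧ j ≤ lastLE σ p := by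
  obtain ⟨hpj, hpred⟩ := Finset.mem_filter.mp hp
  rw [Finset.mem_range] at hpj
  refine ⟨hpj, ?_⟩
  have hpN : p < σ.length := lt_of_lt_of_le hpj hj
  obtain ⟨h1, h2, h3, h4⟩ := nth_valid hval hpN
  have hnotall : ¬ ∀ b ∈ Finset.Icc 1 (nth σ p).1, fpos σ (b, (nth σ p).2) < j := by
    intro hall
    have := le_G (σ := σ) h2 hall
    omega
  push_neg at hnotall
  obtain ⟨b, hb, hble⟩ := hnotall
  obtain ⟨hb1, hb2⟩ := Finset.mem_Icc.mp hb
  have hmem : ((b, (nth σ p).2) : Card) ∈ σ := card_mem huniq hb1 (by omega) h3 h4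
  obtain ⟨hfl, hfe⟩ := fpos_spec' hval huniq hmem
  have : fpos σ (b, (nth σ p).2) ≤ lastLE σ p := by
    apply le_lastLE hfl
    · rw [hfe]
    · rw [hfe]; exact hb2
  omega

theorem Hcard (hval : ValidDeck σ n c) (huniq : Uniq σ n c) (hw : overlapWidth σ ≤ h)
    {j : ℕ} (hj : j ≤ σ.length) : (Hset σ j (G σ n j)).card ≤ h := by
  rcases eq_or_lt_of_le hj with rfl | hjlt
  · have : Hset σ σ.length (G σ n σ.length) = ∅ := by
      refine Finset.eq_empty_of_forall_notMem fun p hp => ?_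
      obtain ⟨hpj, hpl⟩ := Hset_mem_lastLE hval huniq le_rfl hp
      have := lastLE_lt_length (σ := σ) (by omega) p
      omega
    rw [this]; simp
  · have hsub : Hset σ j (G σ n j) ⊆
        (Finset.range σ.length).filter (fun i => i < j ∧ j ≤ lastLE σ i) := by
      intro p hp
      obtain ⟨hpj, hpl⟩ := Hset_mem_lastLE hval huniq (by omega) hp
      exact Finset.mem_filter.mpr ⟨Finset.mem_range.mpr (by omega), hpj, hpl⟩
    calc (Hset σ j (G σ n j)).card
        ≤ ((Finset.range σ.length).filter (fun i => i < j ∧ j ≤ lastLE σ i)).card :=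
          Finset.card_le_card hsub
      _ ≤ overlapWidth σ := by
          rw [overlapWidth]
          exact Finset.le_sup
            (f := fun j => ((Finset.range σ.length).filter
              (fun i => i < j ∧ j ≤ lastLE σ i)).card)
            (Finset.mem_range.mpr hjlt)
      _ ≤ h := hw

theorem chain (hval : ValidDeck σ n c) (huniq : Uniq σ n c) {i : ℕ}
    (hi : i < σ.length) :
    ∀ d m, (nth σ i).1 ≤ m → m + d = G σ n (i+1) (nth σ i).2 →
    PlayFromHand σ
      ⟨Function.update (G σ n i) (nth σ i).2 m,
        Hset σ (i+1) (Function.update (G σ n i) (nth σ i).2 m),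
        Dset σ (i+1) (Function.update (G σ n i) (nth σ i).2 m)⟩
      (gCfg σ n (i+1)) := by
  intro d
  induction d with
  | zero =>
    intro m hm heq
    have hfun : Function.update (G σ n i) (nth σ i).2 m = G σ n (i+1) := by
      funext k
      by_cases hk : k = (nth σ i).2
      · subst hk
        rw [Function.update_self]
        omega
      · rw [Function.update_of_ne hk, G_succ_of_ne hval huniq hi k hk]
    rw [hfun]
    exact PlayFromHand.refl _
  | succ d ih =>
    intro m hm heq
    have hvi := nth_valid hval hi
    have hm1G : m + 1 ≤ G σ n (i+1) (nth σ i).2 := by omega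
    have hm1n : m + 1 ≤ n := le_trans hm1G G_le
    have hmem : ((m + 1, (nth σ i).2) : Card) ∈ σ :=
      card_mem huniq (by omega) hm1n hvi.2.2.1 hvi.2.2.2
    obtain ⟨hqN, hqe⟩ := fpos_spec' hval huniq hmem
    have hqlt : fpos σ (m + 1, (nth σ i).2) < i + 1 := G_lt (by omega) hm1G
    refine PlayFromHand.play _ _ (fpos σ (m + 1, (nth σ i).2)) ?_ ?_ ?_
    · refine Finset.mem_filter.mpr ⟨Finset.mem_range.mpr hqlt, ?_⟩
      rw [hqe, Function.update_self]
      omega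
    · rw [hqe]
      show Function.update (G σ n i) (nth σ i).2 m (nth σ i).2 + 1 = m + 1
      rw [Function.update_self]
    · rw [hqe]
      show PlayFromHand σ
        ⟨Function.update (Function.update (G σ n i) (nth σ i).2 m) (nth σ i).2 (m + 1),
          (Hset σ (i+1) (Function.update (G σ n i) (nth σ i).2 m)).erase
            (fpos σ (m + 1, (nth σ i).2)),
          insert (fpos σ (m + 1, (nth σ i).2))
            (Dset σ (i+1) (Function.update (G σ n i) (nth σ i).2 m))⟩
        (gCfg σ n (i+1))
      rw [Function.update_idem]
      rw [Hset_erase hval huniq (by omega) (G σ n i) hqN hqe]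
      rw [Dset_insert hval huniq (by omega) (G σ n i) hqN hqlt hqe]
      exact ih (m + 1) (by omega) (by omega)

theorem step_greedy (hval : ValidDeck σ n c) (huniq : Uniq σ n c)
    (hw : overlapWidth σ ≤ h) {i : ℕ} (hi : i < σ.length) :
    Step σ h i (gCfg σ n i) (gCfg σ n (i+1)) := by
  have hvi := nth_valid hval hi
  have hlt := G_lt_value hval huniq hi
  by_cases hpl : (nth σ i).1 = G σ n i (nth σ i).2 + 1
  · have hqe : nth σ i = ((G σ n i (nth σ i).2 + 1 : ℕ), (nth σ i).2) := by rw [← hpl]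
    refine Step.playNow _ _ (show G σ n i (nth σ i).2 + 1 = (nth σ i).1 from hpl.symm) ?_
    have e1 : Hset σ i (G σ n i) =
        Hset σ (i+1) (Function.update (G σ n i) (nth σ i).2 (nth σ i).1) := by
      have key := Hset_erase hval huniq (show i + 1 ≤ σ.length by omega) (G σ n i)
        (q := i) (m := G σ n i (nth σ i).2) hi hqe
      rw [Function.update_eq_self, ← hpl, Hset_succ_pos hlt] at key
      have hnot : i ∉ Hset σ i (G σ n i) := by
        intro hmem
        have := Finset.mem_range.mp (Finset.mem_filter.mp hmem).1
        omega
      rw [Finset.erase_insert hnot] at key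
      exact key
    have e2 : insert i (Dset σ i (G σ n i)) =
        Dset σ (i+1) (Function.update (G σ n i) (nth σ i).2 (nth σ i).1) := by
      have key := Dset_insert hval huniq (show i + 1 ≤ σ.length by omega) (G σ n i)
        (q := i) (m := G σ n i (nth σ i).2) hi (by omega) hqe
      rw [Function.update_eq_self, ← hpl, Dset_succ_neg (by omega)] at key
      exact key
    have hstart := chain hval huniq hi (G σ n (i+1) (nth σ i).2 - (nth σ i).1) (nth σ i).1
      le_rfl (by have := G_succ_play hval huniq hi hpl; omega)
    show PlayFromHand σ
      ⟨Function.update (G σ n i) (nth σ i).2 (nth σ i).1,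
        Hset σ i (G σ n i), insert i (Dset σ i (G σ n i))⟩ (gCfg σ n (i+1))
    rw [e1, e2]
    exact hstart
  · have hst : G σ n i (nth σ i).2 + 1 < (nth σ i).1 := by omega
    have hG : G σ n (i+1) = G σ n i := funext fun k => by
      by_cases hk : k = (nth σ i).2
      · subst hk; exact G_succ_store hval huniq hi hst
      · exact G_succ_of_ne hval huniq hi k hk
    have e4 : gCfg σ n (i+1) =
        ⟨(gCfg σ n i).played, insert i (gCfg σ n i).hand, (gCfg σ n i).done⟩ := by
      show Config.mk (G σ n (i+1)) (Hset σ (i+1) (G σ n (i+1))) (Dset σ (i+1) (G σ n (i+1))) = _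
      rw [hG, Hset_succ_pos hlt, Dset_succ_neg (by omega)]
      rfl
    have hsize : (insert i (gCfg σ n i).hand).card ≤ h := by
      have e3 : insert i (gCfg σ n i).hand = Hset σ (i+1) (G σ n (i+1)) := by
        rw [hG, Hset_succ_pos hlt]
        rfl
      rw [e3]
      exact Hcard hval huniq hw (by omega)
    rw [e4]
    exact Step.store _ hsize

theorem gCfg_zero : gCfg σ n 0 = Config.initial := by
  show Config.mk (G σ n 0) (Hset σ 0 (G σ n 0)) (Dset σ 0 (G σ n 0)) = _
  have hg : G σ n 0 = fun _ => 0 := funext fun k => G_zero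
  rw [hg]
  rw [show Hset σ 0 (fun _ => 0) = ∅ by rw [Hset]; rfl]
  rw [show Dset σ 0 (fun _ => 0) = ∅ by rw [Dset]; rfl]
  rfl

theorem exists_winning (hval : ValidDeck σ n c) (huniq : Uniq σ n c)
    (hw : overlapWidth σ ≤ h) :
    ∃ ps : PlaySeq σ h Config.initial, ps.Winning n c := by
  refine ⟨⟨fun j => gCfg σ n j, gCfg_zero, fun i hi => step_greedy hval huniq hw hi⟩, ?_⟩
  intro k hk1 hkc
  show n ≤ G σ n σ.length k
  apply le_G le_rfl
  intro b hb
  obtain ⟨hb1, hb2⟩ := Finset.mem_Icc.mp hb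
  exact (fpos_spec' hval huniq (card_mem huniq hb1 hb2 hk1 hkc)).1

/-! ### Necessity: a winning play sequence forces `overlapWidth σ ≤ h` -/

/-- The invariant maintained at time `j` (about to process card `j`). -/
def Inv (σ : List Card) (h j : ℕ) (cfg : Config) : Prop :=
  cfg.hand ⊆ Finset.range j ∧ cfg.done ⊆ Finset.range j ∧ cfg.hand.card ≤ h ∧
  (∀ k a, 1 ≤ a → a ≤ cfg.played k → ∃ p ∈ cfg.done, nth σ p = (a, k)) ∧
  (∀ p ∈ cfg.done, (nth σ p).1 ≤ cfg.played (nth σ p).2)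

theorem inv_mono {cfg : Config} {j j' : ℕ} (hjj : j ≤ j') (hI : Inv σ h j cfg) :
    Inv σ h j' cfg := by
  obtain ⟨h1, h2, h3, h4, h5⟩ := hI
  have hr : Finset.range j ⊆ Finset.range j' := Finset.range_subset_range.mpr hjj
  exact ⟨h1.trans hr, h2.trans hr, h3, h4, h5⟩

theorem play_inv {cfg : Config} {j q : ℕ} (hq : q < j)
    (hplay : cfg.played (nth σ q).2 + 1 = (nth σ q).1)
    {hand' : Finset ℕ} (hh : hand' ⊆ cfg.hand)
    (hI : Inv σ h j cfg) :
    Inv σ h j ⟨Function.update cfg.played (nth σ q).2 (nth σ q).1, hand',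
      insert q cfg.done⟩ := by
  obtain ⟨h1, h2, h3, h4, h5⟩ := hI
  refine ⟨hh.trans h1, ?_, le_trans (Finset.card_le_card hh) h3, ?_, ?_⟩
  · intro p hp
    rcases Finset.mem_insert.mp hp with rfl | hp'
    · exact Finset.mem_range.mpr hq
    · exact h2 hp'
  · intro k a ha1 ha2
    dsimp only at ha2 ⊢
    by_cases hk : k = (nth σ q).2
    · subst hk
      rw [Function.update_self] at ha2
      rcases eq_or_lt_of_le ha2 with he | hlt
      · exact ⟨q, Finset.mem_insert_self _ _, by rw [he]⟩
      · obtain ⟨p, hp, hpe⟩ := h4 (nth σ q).2 a ha1 (by omega)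
        exact ⟨p, Finset.mem_insert_of_mem hp, hpe⟩
    · rw [Function.update_of_ne hk] at ha2
      obtain ⟨p, hp, hpe⟩ := h4 _ a ha1 ha2
      exact ⟨p, Finset.mem_insert_of_mem hp, hpe⟩
  · intro p hp
    rcases Finset.mem_insert.mp hp with rfl | hp'
    · show (nth σ p).1 ≤ Function.update cfg.played (nth σ p).2 (nth σ p).1 (nth σ p).2
      rw [Function.update_self]
    · show (nth σ p).1 ≤ Function.update cfg.played (nth σ q).2 (nth σ q).1 (nth σ p).2
      have := h5 p hp'
      by_cases hk : (nth σ p).2 = (nth σ q).2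
      · rw [hk, Function.update_self]
        rw [hk] at this
        omega
      · rwa [Function.update_of_ne hk]

theorem pfh_inv {c1 c2 : Config} (hpfh : PlayFromHand σ c1 c2) {j : ℕ}
    (hI : Inv σ h j c1) : Inv σ h j c2 := by
  induction hpfh with
  | refl cfg => exact hI
  | play cfg cfg' q hq hplay htail ih =>
    apply ih
    have hqj : q < j := Finset.mem_range.mp (hI.1 hq)
    exact play_inv hqj hplay (Finset.erase_subset _ _) hI

theorem step_inv {c1 c2 : Config} {i : ℕ} (hst : Step σ h i c1 c2)
    (hI : Inv σ h i c1) : Inv σ h (i+1) c2 := by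
  cases hst with
  | discard => exact inv_mono (Nat.le_succ i) hI
  | store hsize =>
    obtain ⟨h1, h2, h3, h4, h5⟩ := hI
    have hr : Finset.range i ⊆ Finset.range (i+1) := Finset.range_subset_range.mpr (Nat.le_succ i)
    refine ⟨?_, h2.trans hr, hsize, h4, h5⟩
    intro p hp
    rcases Finset.mem_insert.mp hp with rfl | hp'
    · exact Finset.mem_range.mpr (by omega)
    · exact hr (h1 hp')
  | playNow cfg' hplay htail =>
    refine pfh_inv htail ?_
    exact play_inv (by omega) hplay (subset_refl _) (inv_mono (Nat.le_succ i) hI)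

theorem pfh_done_mono {c1 c2 : Config} (hpfh : PlayFromHand σ c1 c2) :
    c1.done ⊆ c2.done := by
  induction hpfh with
  | refl cfg => exact subset_refl _
  | play cfg cfg' q hq hplay htail ih => exact (Finset.subset_insert q cfg.done).trans ih

theorem pfh_dh {c1 c2 : Config} (hpfh : PlayFromHand σ c1 c2) :
    c2.done ∪ c2.hand ⊆ c1.done ∪ c1.hand := by
  induction hpfh with
  | refl cfg => exact subset_refl _
  | play cfg cfg' q hq hplay htail ih =>
    refine ih.trans ?_
    intro p hp
    rcases Finset.mem_union.mp hp with hp' | hp'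
    · rcases Finset.mem_insert.mp hp' with rfl | hp''
      · exact Finset.mem_union_right _ hq
      · exact Finset.mem_union_left _ hp''
    · exact Finset.mem_union_right _ (Finset.erase_subset _ _ hp')

theorem step_done_mono {c1 c2 : Config} {i : ℕ} (hst : Step σ h i c1 c2) :
    c1.done ⊆ c2.done := by
  cases hst with
  | discard => exact subset_refl _
  | store hsize => exact subset_refl _
  | playNow cfg' hplay htail =>
    exact (Finset.subset_insert i _).trans (pfh_done_mono htail)

theorem step_dh {c1 c2 : Config} {i : ℕ} (hst : Step σ h i c1 c2) :
    c2.done ∪ c2.hand ⊆ insert i (c1.done ∪ c1.hand) := by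
  cases hst with
  | discard => exact Finset.subset_insert _ _
  | store hsize =>
    intro p hp
    rcases Finset.mem_union.mp hp with hp' | hp'
    · exact Finset.mem_insert_of_mem (Finset.mem_union_left _ hp')
    · rcases Finset.mem_insert.mp hp' with rfl | hp''
      · exact Finset.mem_insert_self _ _
      · exact Finset.mem_insert_of_mem (Finset.mem_union_right _ hp'')
  | playNow cfg' hplay htail =>
    intro p hp
    have := pfh_dh htail hp
    rcases Finset.mem_union.mp this with hp' | hp'
    · rcases Finset.mem_insert.mp hp' with rfl | hp''
      · exact Finset.mem_insert_self _ _
      · exact Finset.mem_insert_of_mem (Finset.mem_union_left _ hp'')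
    · exact Finset.mem_insert_of_mem (Finset.mem_union_right _ hp')

theorem width_le (hval : ValidDeck σ n c) (huniq : Uniq σ n c)
    (ps : PlaySeq σ h Config.initial) (hwin : ps.Winning n c) :
    overlapWidth σ ≤ h := by
  have hinv : ∀ j, j ≤ σ.length → Inv σ h j (ps.cfgs j) := by
    intro j
    induction j with
    | zero =>
      intro _
      rw [ps.init]
      refine ⟨by simp [Config.initial], by simp [Config.initial], by simp [Config.initial],
        ?_, ?_⟩
      · intro k a ha1 ha2
        exact absurd ha2 (by simp [Config.initial]; omega)
      · intro p hp
        simp [Config.initial] at hp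
    | succ j ih =>
      intro hj
      exact step_inv (ps.step j (by omega)) (ih (by omega))
  have hdh : ∀ j i, i < j → ∀ t, j ≤ t → t ≤ σ.length →
      i ∈ (ps.cfgs t).done ∪ (ps.cfgs t).hand →
      i ∈ (ps.cfgs j).done ∪ (ps.cfgs j).hand := by
    intro j i hij t hjt
    induction t, hjt using Nat.le_induction with
    | base => exact fun _ hm => hm
    | succ t hjt ih =>
      intro htN hmem
      have := step_dh (ps.step t (by omega)) hmem
      rcases Finset.mem_insert.mp this with rfl | hp'
      · omega
      · exact ih (by omega) hp'
  have hfinal : ∀ i, i < σ.length → i ∈ (ps.cfgs σ.length).done := by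
    intro i hi
    obtain ⟨ha1, han, hk1, hkc⟩ := nth_valid hval hi
    have hn : n ≤ (ps.cfgs σ.length).played (nth σ i).2 := hwin _ hk1 hkc
    obtain ⟨p, hp, hpe⟩ := (hinv σ.length le_rfl).2.2.2.1 (nth σ i).2 (nth σ i).1 ha1
      (le_trans han hn)
    have hpN : p < σ.length := Finset.mem_range.mp ((hinv σ.length le_rfl).2.1 hp)
    have hpi : p = i := nth_inj hval huniq hpN hi (by rw [hpe])
    rwa [← hpi]
  have hlast : ∀ j, j ≤ σ.length → ∀ p ∈ (ps.cfgs j).done, lastLE σ p < j := by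
    intro j hjN p hp
    obtain ⟨-, h2, -, h4, h5⟩ := hinv j hjN
    have hpj : p < j := Finset.mem_range.mp (h2 hp)
    rw [lastLE]
    refine (Finset.sup_lt_iff (show (0:ℕ) < j by omega)).mpr fun q hq => ?_
    have hq' := Finset.mem_filter.mp hq
    have hqN : q < σ.length := Finset.mem_range.mp hq'.1
    have hqc : (nth σ q).2 = (nth σ p).2 := hq'.2.1
    have hqv : (nth σ q).1 ≤ (nth σ p).1 := hq'.2.2
    have hq1 : 1 ≤ (nth σ q).1 := (nth_valid hval hqN).1
    obtain ⟨p', hp', hpe'⟩ := h4 (nth σ p).2 (nth σ q).1 hq1 (le_trans hqv (h5 p hp))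
    have hp'j : p' < j := Finset.mem_range.mp (h2 hp')
    have hp'N : p' < σ.length := by omega
    have : p' = q := nth_inj hval huniq hp'N hqN (by rw [hpe', ← hqc])
    show id q < j
    rw [id]
    omega
  rw [overlapWidth]
  apply Finset.sup_le
  intro j hj
  rw [Finset.mem_range] at hj
  have hsub : (Finset.range σ.length).filter (fun i => i < j ∧ j ≤ lastLE σ i) ⊆
      (ps.cfgs j).hand := by
    intro i hi
    have hi' := Finset.mem_filter.mp hi
    have hiN : i < σ.length := Finset.mem_range.mp hi'.1
    have hij : i < j := hi'.2.1
    have hjl : j ≤ lastLE σ i := hi'.2.2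
    have hidone : i ∉ (ps.cfgs j).done := by
      intro hd
      have := hlast j (by omega) i hd
      omega
    have hmem : i ∈ (ps.cfgs j).done ∪ (ps.cfgs j).hand :=
      hdh j i hij σ.length (by omega) le_rfl
        (Finset.mem_union_left _ (hfinal i hiN))
    rcases Finset.mem_union.mp hmem with hd | hh'
    · exact absurd hd hidone
    · exact hh'
  calc ((Finset.range σ.length).filter (fun i => i < j ∧ j ≤ lastLE σ i)).card
      ≤ (ps.cfgs j).hand.card := Finset.card_le_card hsub
    _ ≤ h := (hinv j (by omega)).2.2.1

end HanabiAux

/-- For a deck with multiplicity `r = 1` (every (value, color) pair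
occurs exactly once, so `N = c·n`), there is a winning play sequence with hand size `h`
if and only if `w ≤ h`. -/
theorem hanabi_multiplicity_one_iff_overlap_le_handsize
    (n c h : ℕ) (σ : List Card)
    (hval : ValidDeck σ n c)
    (hlen : σ.length = c * n)
    (huniq : ∀ a k, 1 ≤ a → a ≤ n → 1 ≤ k → k ≤ c → σ.count (a, k) = 1) :
    (∃ ps : PlaySeq σ h Config.initial, ps.Winning n c) ↔ overlapWidth σ ≤ h := by
  constructor
  · rintro ⟨ps, hwin⟩
    exact HanabiAux.width_le hval huniq ps hwin
  · intro hw
    exact HanabiAux.exists_winning hval huniq hw
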